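/- For any integer N ≥ 2, the number of quadruples (n₁, n₂, m₁, m₂) of integers with N < n₁, n₂, m₁, m₂ ≤ 2N satisfying |n₁² + n₂² − m₁² − m₂²| ≤ N and |n₁⁴ + n₂⁴ − m₁⁴ − m₂⁴| ≤ N³ is O(N² log N). -/

import Mathlib

open Finset

private lemma sq_unique {N a b : ℤ} (ha : N < a) (ha' : a ≤ 2*N) (hb : N < b)
    (hb' : b ≤ 2*N) (h : |a^2 - b^2| ≤ 2*N) : a = b := by
  rcases abs_le.mp h with ⟨h1, h2⟩
  by_contra hne
  rcases lt_or_gt_of_ne hne with hlt | hlt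
  · nlinarith
  · nlinarith

private lemma key {N n1 n2 m1 m2 : ℤ} (hN : 2 ≤ N)
    (hn1 : N < n1) (hn1' : n1 ≤ 2*N) (hn2 : N < n2) (hn2' : n2 ≤ 2*N)
    (hm1 : N < m1) (hm1' : m1 ≤ 2*N) (hm2 : N < m2) (hm2' : m2 ≤ 2*N)
    (h1 : |n1^2 + n2^2 - m1^2 - m2^2| ≤ N)
    (h2 : |n1^4 + n2^4 - m1^4 - m2^4| ≤ N^3) :
    |(n1 - m1) * (n1 - m2)| ≤ 2*N := by
  rcases abs_le.mp h1 with ⟨h1a, h1b⟩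
  rcases abs_le.mp h2 with ⟨h2a, h2b⟩
  have hid : 2*((n1-m1)*(n1-m2))*((n1+m1)*(n1+m2)) =
      -2*(n1^2+n2^2-m1^2-m2^2)*n2^2 + (n1^2+n2^2-m1^2-m2^2)^2
        + (n1^4+n2^4-m1^4-m2^4) := by ring
  have hbig : |2*((n1-m1)*(n1-m2))*((n1+m1)*(n1+m2))| ≤ 10*N^3 := by
    rw [hid, abs_le]
    constructor
    · nlinarith [sq_nonneg n2, sq_nonneg (n1^2+n2^2-m1^2-m2^2 - N),
        sq_nonneg (n1^2+n2^2-m1^2-m2^2 + N), sq_nonneg (n2 - 2*N)]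
    · nlinarith [sq_nonneg n2, sq_nonneg (n1^2+n2^2-m1^2-m2^2 - N),
        sq_nonneg (n1^2+n2^2-m1^2-m2^2 + N), sq_nonneg (n2 - 2*N)]
  have hQ : 4*N^2 ≤ (n1+m1)*(n1+m2) := by nlinarith
  have habs : |2*((n1-m1)*(n1-m2))*((n1+m1)*(n1+m2))|
      = 2 * |(n1-m1)*(n1-m2)| * ((n1+m1)*(n1+m2)) := by
    rw [abs_mul, abs_mul]
    rw [abs_of_nonneg (by nlinarith : (0:ℤ) ≤ (n1+m1)*(n1+m2)), abs_two]
  rw [habs] at hbig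
  nlinarith [abs_nonneg ((n1-m1)*(n1-m2))]

private lemma toNat_cast_real {x : ℤ} (h : 0 ≤ x) : ((x.toNat : ℕ) : ℝ) = (x : ℝ) := by
  exact_mod_cast Int.toNat_of_nonneg h

theorem stmt_0 :
    ∃ C : ℝ, 0 < C ∧ ∀ N : ℤ, 2 ≤ N →
      (((((Finset.Ioc N (2*N)) ×ˢ (Finset.Ioc N (2*N))) ×ˢ
          ((Finset.Ioc N (2*N)) ×ˢ (Finset.Ioc N (2*N)))).filter
        (fun x =>
          |x.1.1^2 + x.1.2^2 - x.2.1^2 - x.2.2^2| ≤ N ∧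
          |x.1.1^4 + x.1.2^4 - x.2.1^4 - x.2.2^4| ≤ N^3)).card : ℝ)
        ≤ C * (N : ℝ)^2 * Real.log N := by
  refine ⟨100, by norm_num, fun N hN => ?_⟩
  have hN0 : (0:ℤ) < N := by omega
  have hNR : (2:ℝ) ≤ (N:ℝ) := by exact_mod_cast hN
  set I := Finset.Ioc N (2*N) with hI
  set S := ((I ×ˢ I) ×ˢ (I ×ˢ I)).filter
        (fun x : (ℤ × ℤ) × (ℤ × ℤ) =>
          |x.1.1^2 + x.1.2^2 - x.2.1^2 - x.2.2^2| ≤ N ∧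
          |x.1.1^4 + x.1.2^4 - x.2.1^4 - x.2.2^4| ≤ N^3) with hS
  set D := ((Finset.Icc (-N) N) ×ˢ (Finset.Icc (-N) N)).filter
      (fun d : ℤ × ℤ => |d.1 * d.2| ≤ 2*N) with hDdef
  -- Step 1: injection
  have h1 : S.card ≤ (I ×ˢ D).card := by
    apply Finset.card_le_card_of_injOn
      (fun x => (x.1.1, (x.1.1 - x.2.1, x.1.1 - x.2.2)))
    · intro x hx
      simp only [hS, Finset.mem_coe, Finset.mem_filter, Finset.mem_product, hI, Finset.mem_Ioc] at hx
      obtain ⟨⟨⟨⟨hn1, hn1'⟩, hn2, hn2'⟩, ⟨hm1, hm1'⟩, hm2, hm2'⟩, hc1, hc2⟩ := hx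
      simp only [hDdef, Finset.mem_coe, Finset.mem_product, Finset.mem_filter, hI, Finset.mem_Ioc,
        Finset.mem_Icc]
      exact ⟨⟨hn1, hn1'⟩, ⟨⟨⟨by omega, by omega⟩, by omega, by omega⟩,
        key hN hn1 hn1' hn2 hn2' hm1 hm1' hm2 hm2' hc1 hc2⟩⟩
    · intro x hx y hy hxy
      obtain ⟨⟨a1, a2⟩, a3, a4⟩ := x
      obtain ⟨⟨b1, b2⟩, b3, b4⟩ := y
      simp only [Prod.mk.injEq] at hxy ⊢
      obtain ⟨e1, e2, e3⟩ := hxy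
      subst e1
      have em1 : a3 = b3 := by omega
      have em2 : a4 = b4 := by omega
      subst em1; subst em2
      refine ⟨⟨rfl, ?_⟩, rfl, rfl⟩
      simp only [hS, Finset.mem_coe, Finset.mem_filter, Finset.mem_product, hI,
        Finset.mem_Ioc] at hx hy
      obtain ⟨⟨⟨⟨hn1, hn1'⟩, hn2, hn2'⟩, _⟩, hc1, _⟩ := hx
      obtain ⟨⟨⟨_, hm2, hm2'⟩, _⟩, hd1, _⟩ := hy
      refine sq_unique hn2 hn2' hm2 hm2' ?_
      rcases abs_le.mp hc1 with ⟨ha1, ha2⟩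
      rcases abs_le.mp hd1 with ⟨hb1, hb2⟩
      rw [abs_le]
      constructor <;> nlinarith
  -- Step 2: card of product
  have hIcard : (I.card : ℝ) = (N : ℝ) := by
    rw [hI, Int.card_Ioc]
    have : 2*N - N = N := by ring
    rw [this]; exact toNat_cast_real (by omega)
  have h2 : ((I ×ˢ D).card : ℝ) = (N:ℝ) * D.card := by
    rw [Finset.card_product]; push_cast; rw [hIcard]
  -- Step 3: fiberwise decomposition of D
  have hfib : D.card = ∑ d1 ∈ Finset.Icc (-N) N,
      ((D.filter (fun a => a.1 = d1)).card) := by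
    apply Finset.card_eq_sum_card_fiberwise
    intro x hx
    simp only [hDdef, Finset.mem_coe, Finset.mem_filter, Finset.mem_product] at hx
    exact hx.1.1
  have hfib2 : ∀ d1 ∈ Finset.Icc (-N) N,
      ((D.filter (fun a => a.1 = d1)).card : ℝ) ≤
        if d1 = 0 then (2*(N:ℝ)+1) else 4*(N:ℝ)/|(d1:ℝ)| + 1 := by
    intro d1 _
    set t1 := (Finset.Icc (-N) N).filter (fun d2 => |d1 * d2| ≤ 2*N) with ht1
    have hle : (D.filter (fun a => a.1 = d1)).card ≤ t1.card := by
      apply Finset.card_le_card_of_injOn (fun a => a.2)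
      · intro a ha
        simp only [hDdef, Finset.mem_coe, Finset.mem_filter, Finset.mem_product] at ha
        obtain ⟨⟨⟨_, ha2⟩, hab⟩, hfst⟩ := ha
        simp only [ht1, Finset.mem_coe, Finset.mem_filter]
        exact ⟨ha2, by rwa [hfst] at hab⟩
      · intro a ha b hb hab
        simp only [Finset.mem_coe, Finset.mem_filter] at ha hb
        exact Prod.ext (ha.2.trans hb.2.symm) hab
    split_ifs with h0
    · subst h0
      have hsub : t1 ⊆ Finset.Icc (-N) N := Finset.filter_subset _ _
      have : (D.filter (fun a => a.1 = (0:ℤ))).card ≤ (Finset.Icc (-N) N).card :=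
        hle.trans (Finset.card_le_card hsub)
      rw [Int.card_Icc] at this
      calc ((D.filter (fun a => a.1 = (0:ℤ))).card : ℝ)
          ≤ ((N + 1 - -N).toNat : ℝ) := by exact_mod_cast this
        _ = 2*(N:ℝ)+1 := by rw [toNat_cast_real (by omega)]; push_cast; ring
    · have hpos : 0 < |d1| := abs_pos.mpr h0
      set k := 2*N / |d1| with hk
      have hk0 : (0:ℤ) ≤ k := Int.ediv_nonneg (by omega) (le_of_lt hpos)
      have hsub : t1 ⊆ Finset.Icc (-k) k := by
        intro d2 hd2
        simp only [ht1, Finset.mem_filter, Finset.mem_Icc] at hd2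
        have hmul : |d2| * |d1| ≤ 2*N := by
          rw [← abs_mul, mul_comm]; exact hd2.2
        have h3 : |d2| ≤ k := (Int.le_ediv_iff_mul_le hpos).mpr hmul
        rw [Finset.mem_Icc]
        constructor
        · linarith [neg_abs_le d2]
        · linarith [le_abs_self d2]
      have hc : t1.card ≤ (2*k+1).toNat := by
        calc t1.card ≤ (Finset.Icc (-k) k).card := Finset.card_le_card hsub
          _ = (k + 1 - -k).toNat := Int.card_Icc _ _
          _ = (2*k+1).toNat := by congr 1; ring
      have hd1R : (0:ℝ) < |(d1:ℝ)| := by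
        rw [← Int.cast_abs]; exact_mod_cast hpos
      have hkR : (k:ℝ) ≤ 2*(N:ℝ)/|(d1:ℝ)| := by
        rw [le_div_iff₀ hd1R]
        have := Int.ediv_mul_le (2*N) (ne_of_gt hpos)
        rw [← hk] at this
        calc (k:ℝ) * |(d1:ℝ)| = ((k * |d1| : ℤ) : ℝ) := by push_cast; ring
          _ ≤ ((2*N : ℤ) : ℝ) := by exact_mod_cast this
          _ = 2*(N:ℝ) := by push_cast; ring
      calc ((D.filter (fun a => a.1 = d1)).card : ℝ)
          ≤ (t1.card : ℝ) := by exact_mod_cast hle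
        _ ≤ ((2*k+1).toNat : ℝ) := by exact_mod_cast hc
        _ = 2*(k:ℝ)+1 := by rw [toNat_cast_real (by omega)]; push_cast; ring
        _ ≤ 4*(N:ℝ)/|(d1:ℝ)| + 1 := by
            have : 4*(N:ℝ)/|(d1:ℝ)| = 2 * (2*(N:ℝ)/|(d1:ℝ)|) := by ring
            rw [this]; linarith
  -- Step 4: the harmonic sum bound
  have hharm : ∑ k ∈ Finset.Icc (1:ℤ) N, 1/(k:ℝ) ≤ 1 + Real.log N := by
    have hNN : ((N.toNat : ℕ) : ℝ) = (N:ℝ) := by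
      exact_mod_cast congrArg (Int.cast : ℤ → ℝ) (Int.toNat_of_nonneg (le_of_lt hN0))
    have e1 : ∑ k ∈ Finset.Icc (1:ℤ) N, 1/(k:ℝ)
        = ∑ k ∈ Finset.Icc 1 N.toNat, 1/(k:ℝ) := by
      apply Finset.sum_nbij' (i := fun x : ℤ => x.toNat) (j := fun n : ℕ => (n:ℤ))
      · intro a ha; simp only [Finset.mem_Icc] at ha ⊢; omega
      · intro a ha; simp only [Finset.mem_Icc] at ha ⊢; omega
      · intro a ha; simp only [Finset.mem_Icc] at ha; omega
      · intro a ha; simp only [Finset.mem_Icc] at ha; omega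
      · intro a ha
        simp only [Finset.mem_Icc] at ha
        congr 1
        exact_mod_cast congrArg (Int.cast : ℤ → ℝ) (Int.toNat_of_nonneg (by omega)).symm
    have e2 : ∑ k ∈ Finset.Icc 1 N.toNat, 1/(k:ℝ) = ((harmonic N.toNat : ℚ) : ℝ) := by
      rw [harmonic_eq_sum_Icc]
      push_cast
      simp [one_div]
    rw [e1, e2, ← hNN]
    exact harmonic_le_one_add_log N.toNat
  -- Step 5: sum over d1
  set E := (Finset.Icc (-N) N).erase 0 with hE
  have hEcard : (E.card : ℝ) ≤ 2*(N:ℝ)+1 := by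
    have : E.card ≤ (Finset.Icc (-N) N).card := Finset.card_le_card (Finset.erase_subset _ _)
    rw [Int.card_Icc] at this
    calc (E.card : ℝ) ≤ ((N + 1 - -N).toNat : ℝ) := by exact_mod_cast this
      _ = 2*(N:ℝ)+1 := by rw [toNat_cast_real (by omega)]; push_cast; ring
  have hEsum : ∑ d1 ∈ E, 1/|(d1:ℝ)| ≤ 2 * (1 + Real.log N) := by
    have hEeq : E = Finset.Icc (-N) (-1) ∪ Finset.Icc 1 N := by
      ext x
      simp only [hE, Finset.mem_erase, Finset.mem_Icc, Finset.mem_union]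
      omega
    have hdisj : Disjoint (Finset.Icc (-N) (-1)) (Finset.Icc (1:ℤ) N) := by
      rw [Finset.disjoint_left]
      intro a ha hb
      simp only [Finset.mem_Icc] at ha hb
      omega
    rw [hEeq, Finset.sum_union hdisj]
    have hneg : ∑ d1 ∈ Finset.Icc (-N) (-1), 1/|(d1:ℝ)|
        = ∑ k ∈ Finset.Icc (1:ℤ) N, 1/(k:ℝ) := by
      apply Finset.sum_nbij' (i := fun x : ℤ => -x) (j := fun x : ℤ => -x)
      · intro a ha; simp only [Finset.mem_Icc] at ha ⊢; omega
      · intro a ha; simp only [Finset.mem_Icc] at ha ⊢; omega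
      · intro a _; ring
      · intro a _; ring
      · intro a ha
        simp only [Finset.mem_Icc] at ha
        have : |(a:ℝ)| = ((-a : ℤ) : ℝ) := by
          rw [abs_of_nonpos (by exact_mod_cast (by omega : a ≤ 0))]; push_cast; ring
        rw [this]
    have hposum : ∑ d1 ∈ Finset.Icc (1:ℤ) N, 1/|(d1:ℝ)|
        = ∑ k ∈ Finset.Icc (1:ℤ) N, 1/(k:ℝ) := by
      apply Finset.sum_congr rfl
      intro x hx
      simp only [Finset.mem_Icc] at hx
      rw [abs_of_pos (by exact_mod_cast (by omega : (0:ℤ) < x))]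
    rw [hneg, hposum]
    linarith [hharm]
  have hDR : (D.card : ℝ) ≤ (2*(N:ℝ)+1) + (4*(N:ℝ) * (2 * (1 + Real.log N)) + (2*(N:ℝ)+1)) := by
    have hzero : (0:ℤ) ∈ Finset.Icc (-N) N := by simp only [Finset.mem_Icc]; omega
    have step : (D.card : ℝ) ≤ ∑ d1 ∈ Finset.Icc (-N) N,
        (if d1 = 0 then (2*(N:ℝ)+1) else 4*(N:ℝ)/|(d1:ℝ)| + 1) := by
      rw [hfib]
      push_cast
      exact Finset.sum_le_sum hfib2
    rw [← Finset.add_sum_erase _ _ hzero, if_pos rfl] at step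
    refine step.trans (add_le_add_right ?_ _)
    have herase : ∑ d1 ∈ (Finset.Icc (-N) N).erase 0,
        (if d1 = 0 then (2*(N:ℝ)+1) else 4*(N:ℝ)/|(d1:ℝ)| + 1)
        = ∑ d1 ∈ E, (4*(N:ℝ)/|(d1:ℝ)| + 1) := by
      apply Finset.sum_congr rfl
      intro d1 hd1
      exact if_neg (Finset.ne_of_mem_erase hd1)
    rw [herase, Finset.sum_add_distrib, Finset.sum_const, nsmul_eq_mul, mul_one]
    have hmul : ∑ d1 ∈ E, 4*(N:ℝ)/|(d1:ℝ)| = 4*(N:ℝ) * ∑ d1 ∈ E, 1/|(d1:ℝ)| := by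
      rw [Finset.mul_sum]
      apply Finset.sum_congr rfl
      intro d1 _
      ring
    rw [hmul]
    have hN4 : (0:ℝ) ≤ 4*(N:ℝ) := by linarith
    have := mul_le_mul_of_nonneg_left hEsum hN4
    linarith
  -- Final assembly
  have hlog2 : (0.6931471803:ℝ) < Real.log 2 := Real.log_two_gt_d9
  have hmono : Real.log 2 ≤ Real.log N := Real.log_le_log (by norm_num) hNR
  have hL : (0.6931471803:ℝ) ≤ Real.log N := le_of_lt (lt_of_lt_of_le hlog2 hmono)
  have hNpos : (0:ℝ) < (N:ℝ) := by linarith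
  calc (S.card : ℝ) ≤ ((I ×ˢ D).card : ℝ) := by exact_mod_cast h1
    _ = (N:ℝ) * D.card := h2
    _ ≤ (N:ℝ) * ((2*(N:ℝ)+1) + (4*(N:ℝ) * (2 * (1 + Real.log N)) + (2*(N:ℝ)+1))) :=
        mul_le_mul_of_nonneg_left hDR (le_of_lt hNpos)
    _ ≤ 100 * (N:ℝ)^2 * Real.log N := by
        nlinarith [mul_nonneg (mul_nonneg hNpos.le hNpos.le) (sub_nonneg.mpr hL),
          sq_nonneg ((N:ℝ) - 2), mul_pos hNpos hNpos]
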